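/- For the free group F_r on r generators (r a positive natural number or countably infinite), the function g ↦ (−1)^{‖g‖₂²} is positive definite on F_r. -/

import Mathlib

open ComplexOrder

/-- Sum of squared block lengths of a reduced word, given the generator of the
current block and its current length. Blocks are maximal runs of the same generator. -/
def blockSqSumAux {ι : Type*} [DecidableEq ι] (a : ι) (n : ℕ) :
    List (ι × Bool) → ℕ
  | [] => n ^ 2
  | (b, _) :: l => if b = a then blockSqSumAux a (n + 1) l else n ^ 2 + blockSqSumAux b 1 l

/-- The squared ℓ² length of an element of a free group: for a reduced block form
`g = a₁^{k₁} ⋯ a_n^{k_n}` it equals `∑ i, k_i²`. -/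
def l2sq {ι : Type*} [DecidableEq ι] (g : FreeGroup ι) : ℕ :=
  match FreeGroup.toWord g with
  | [] => 0
  | (a, _) :: l => blockSqSumAux a 1 l

/-- A real-valued function on a group is positive definite. -/
def IsPositiveDefinite {G : Type*} [Group G] (φ : G → ℝ) : Prop :=
  ∀ (n : ℕ) (x : Fin n → G) (c : Fin n → ℂ),
    0 ≤ ∑ j, ∑ k, c j * (starRingEnd ℂ) (c k) * (φ ((x j)⁻¹ * x k) : ℂ)

lemma sq_mod_two (n : ℕ) : n ^ 2 % 2 = n % 2 := by
  rcases Nat.mod_two_eq_zero_or_one n with h | h <;> simp [Nat.pow_mod, h]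

/-- `blockSqSumAux a n l` has the same parity as `n + l.length`, since `k² ≡ k (mod 2)`. -/
lemma blockSqSumAux_parity {ι : Type*} [DecidableEq ι] :
    ∀ (l : List (ι × Bool)) (a : ι) (n : ℕ),
      blockSqSumAux a n l % 2 = (n + l.length) % 2 := by
  intro l
  induction l with
  | nil => intro a n; simp [blockSqSumAux, sq_mod_two]
  | cons hd tl ih =>
    intro a n
    obtain ⟨b, s⟩ := hd
    simp only [blockSqSumAux]
    by_cases h : b = a
    · simp only [h, if_true, ih, List.length_cons]
      omega
    · simp only [h, if_false, List.length_cons]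
      rw [Nat.add_mod, ih, sq_mod_two, ← Nat.add_mod]
      omega

lemma neg_one_pow_mod (m n : ℕ) (h : m % 2 = n % 2) : (-1:ℝ)^m = (-1)^n := by
  conv_lhs => rw [← Nat.div_add_mod m 2]
  conv_rhs => rw [← Nat.div_add_mod n 2]
  rw [pow_add, pow_add, pow_mul, pow_mul, h]
  norm_num

/-- `(-1)^{‖g‖₂²}` only depends on the parity of the word length of `g`. -/
lemma l2sq_parity {ι : Type*} [DecidableEq ι] (g : FreeGroup ι) :
    (-1:ℝ) ^ l2sq g = (-1) ^ (FreeGroup.toWord g).length := by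
  unfold l2sq
  rcases hw : FreeGroup.toWord g with _ | ⟨⟨a, s⟩, l⟩
  · simp
  · apply neg_one_pow_mod
    simp [blockSqSumAux_parity, Nat.add_comm]

/-- The mod-2 exponent-sum character of the free group. -/
noncomputable def chi {ι : Type*} : FreeGroup ι →* ℝˣ :=
  FreeGroup.lift (fun _ => -1)

lemma chi_mk {ι : Type*} (L : List (ι × Bool)) :
    ((chi (FreeGroup.mk L) : ℝˣ) : ℝ) = (-1) ^ L.length := by
  rw [chi, FreeGroup.lift_mk]
  induction L with
  | nil => simp
  | cons hd tl ih =>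
    obtain ⟨a, b⟩ := hd
    simp only [List.map_cons, List.prod_cons, Units.val_mul, ih, List.length_cons, pow_succ]
    cases b <;> simp [mul_comm]

lemma chi_eq {ι : Type*} [DecidableEq ι] (g : FreeGroup ι) :
    ((chi g : ℝˣ) : ℝ) = (-1) ^ l2sq g := by
  rw [l2sq_parity, ← chi_mk (FreeGroup.toWord g), FreeGroup.mk_toWord]

lemma chi_val {ι : Type*} [DecidableEq ι] (g : FreeGroup ι) :
    ((chi g : ℝˣ) : ℝ) = 1 ∨ ((chi g : ℝˣ) : ℝ) = -1 := by
  rw [chi_eq]; rcases Nat.even_or_odd (l2sq g) with h | h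
  · left; exact h.neg_one_pow
  · right; exact h.neg_one_pow

/-- Multiplicativity of `g ↦ (-1)^{‖g‖₂²}`. -/
lemma key_mul {ι : Type*} [DecidableEq ι] (x y : FreeGroup ι) :
    (-1:ℝ) ^ l2sq (x⁻¹ * y) = (-1) ^ l2sq x * (-1) ^ l2sq y := by
  rw [← chi_eq, ← chi_eq, ← chi_eq, map_mul, map_inv, Units.val_mul]
  congr 1
  rw [Units.val_inv_eq_inv_val]
  rcases chi_val (ι := ι) x with h | h <;> rw [h] <;> norm_num

/-- On the free group `F_r` on `r` generators (`r` a positive natural number or countably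
infinite), the function `g ↦ (−1)^{‖g‖₂²}` is positive definite. -/
theorem neg_one_pow_l2sq_posDef
    {ι : Type*} [DecidableEq ι] [Countable ι] [Nonempty ι] :
    IsPositiveDefinite (fun g : FreeGroup ι => (-1 : ℝ) ^ l2sq g) := by
  intro n x c
  set w : Fin n → ℂ := fun j => c j * (((-1:ℝ) ^ l2sq (x j) : ℝ) : ℂ) with hw
  have hterm : ∀ j k, c j * (starRingEnd ℂ) (c k) *
      (((-1:ℝ) ^ l2sq ((x j)⁻¹ * x k) : ℝ) : ℂ) = w j * (starRingEnd ℂ) (w k) := by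
    intro j k
    rw [key_mul]
    simp only [hw, map_mul, Complex.conj_ofReal]
    push_cast
    ring
  have : ∑ j, ∑ k, c j * (starRingEnd ℂ) (c k) *
      (((-1:ℝ) ^ l2sq ((x j)⁻¹ * x k) : ℝ) : ℂ)
      = (∑ j, w j) * (starRingEnd ℂ) (∑ k, w k) := by
    rw [map_sum, Finset.sum_mul_sum]
    exact Finset.sum_congr rfl fun j _ => Finset.sum_congr rfl fun k _ => hterm j k
  simp only [this, Complex.mul_conj]
  rw [Complex.zero_le_real]
  exact Complex.normSq_nonneg _
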